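/- Let M ∈ ℝ^{d×d} be positive definite and let M', N ∈ ℝ^{d×d} satisfy (1−ε)M ⪯ M' ⪯ (1+ε)M for ε ≤ 1/8 and (7/8)N ⪯ M^{-1} ⪯ (8/7)N. Then ‖I − NM'‖_M ≤ 2/5, where ‖B‖_M := ‖M^{1/2} B M^{-1/2}‖₂ is the operator norm induced by the M-norm. -/

import Mathlib

set_option linter.unusedSectionVars false

open Matrix

/-- The square root of a positive semidefinite matrix, as defined in the older Mathlib
(`Matrix.PosSemidef.sqrt`, since removed in favour of `CFC.sqrt`). -/
noncomputable def Matrix.PosSemidef.sqrt {n : Type*} [Fintype n] [DecidableEq n]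
    {A : Matrix n n ℝ} (hA : A.PosSemidef) : Matrix n n ℝ :=
  (hA.1.eigenvectorUnitary : Matrix n n ℝ) * diagonal (fun i => Real.sqrt (hA.1.eigenvalues i)) *
    (star hA.1.eigenvectorUnitary : Matrix n n ℝ)

section Helpers
variable {n : Type*} [Fintype n] [DecidableEq n]

private lemma lsub_trans {A B E : Matrix n n ℝ} (h1 : (A - B).PosSemidef)
    (h2 : (B - E).PosSemidef) : (A - E).PosSemidef := by
  have := h1.add h2; rwa [sub_add_sub_cancel] at this

private lemma lconj {A B : Matrix n n ℝ} (X : Matrix n n ℝ) (h : (A - B).PosSemidef) :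
    (X * A * Xᴴ - X * B * Xᴴ).PosSemidef := by
  have := h.mul_mul_conjTranspose_same X
  simpa [Matrix.mul_sub, Matrix.sub_mul] using this

private lemma lsmul {A : Matrix n n ℝ} (h : A.PosSemidef) {c : ℝ} (hc : 0 ≤ c) :
    (c • A).PosSemidef := by
  refine Matrix.PosSemidef.of_dotProduct_mulVec_nonneg ?_ fun x => ?_
  · unfold Matrix.IsHermitian
    rw [conjTranspose_smul, h.1]
    simp
  · have h2 := h.dotProduct_mulVec_nonneg x
    rw [smul_mulVec, dotProduct_smul]
    exact mul_nonneg hc h2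

private lemma lsmul_one {c : ℝ} (hc : 0 ≤ c) : ((c : ℝ) • (1 : Matrix n n ℝ)).PosSemidef :=
  lsmul Matrix.PosSemidef.one hc

private lemma ofReal_comp (f : n → ℝ) : (RCLike.ofReal ∘ f : n → ℝ) = f := by
  ext i; simp [RCLike.ofReal]

private lemma conj_diag_psd {U : Matrix n n ℝ} (f : n → ℝ) (hf : ∀ i, 0 ≤ f i) :
    (U * diagonal f * star U).PosSemidef := by
  have h := (Matrix.PosSemidef.diagonal (Pi.le_def.mpr hf)).mul_mul_conjTranspose_same U
  rwa [star_eq_conjTranspose]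

private lemma cdiag_one {U : Matrix n n ℝ} (hU' : U * star U = 1) (c : ℝ) :
    (c • 1 : Matrix n n ℝ) = U * diagonal (fun _ => c) * star U := by
  have hd : diagonal (fun _ : n => c) = c • (1 : Matrix n n ℝ) := (smul_one_eq_diagonal c).symm
  rw [hd, Matrix.mul_smul, Matrix.mul_one, Matrix.smul_mul, hU']

private lemma cdiag_sub {U : Matrix n n ℝ} (f g : n → ℝ) :
    U * diagonal f * star U - U * diagonal g * star U
      = U * diagonal (fun i => f i - g i) * star U := by
  rw [← diagonal_sub, Matrix.mul_sub, Matrix.sub_mul]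

private lemma cdiag_mul {U : Matrix n n ℝ} (hUs : star U * U = 1) (f g : n → ℝ) :
    (U * diagonal f * star U) * (U * diagonal g * star U)
      = U * diagonal (fun i => f i * g i) * star U := by
  calc (U * diagonal f * star U) * (U * diagonal g * star U)
      = U * (diagonal f * ((star U * U) * (diagonal g * star U))) := by
        simp only [Matrix.mul_assoc]
    _ = U * (diagonal f * diagonal g) * star U := by
        rw [hUs, Matrix.one_mul]
        simp only [Matrix.mul_assoc]
    _ = U * diagonal (fun i => f i * g i) * star U := by
        rw [diagonal_mul_diagonal]

private lemma spec_real {C : Matrix n n ℝ} (hC : C.IsHermitian) :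
    C = (hC.eigenvectorUnitary : Matrix n n ℝ) * diagonal hC.eigenvalues *
      star (hC.eigenvectorUnitary : Matrix n n ℝ) := by
  have := hC.spectral_theorem
  rwa [ofReal_comp] at this

private lemma eig_lb {C : Matrix n n ℝ} (hC : C.IsHermitian) {a : ℝ}
    (h1 : (C - a • 1).PosSemidef) (i : n) : a ≤ hC.eigenvalues i := by
  set U : Matrix n n ℝ := (hC.eigenvectorUnitary : Matrix n n ℝ) with hUdef
  have hUs : star U * U = 1 := Unitary.coe_star_mul_self _
  have hU' : U * star U = 1 := Matrix.mem_unitaryGroup_iff.mp hC.eigenvectorUnitary.2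
  have key := h1.conjTranspose_mul_mul_same U
  rw [← star_eq_conjTranspose] at key
  have hrw : star U * (C - a • 1) * U = diagonal (fun i => hC.eigenvalues i - a) := by
    have hdiag : star U * C * U = diagonal hC.eigenvalues := by
      have hs := spec_real hC
      calc star U * C * U = star U * (U * diagonal hC.eigenvalues * star U) * U := by rw [← hs]
        _ = diagonal hC.eigenvalues := by
          simp only [← Matrix.mul_assoc, hUs, Matrix.one_mul]
          simp only [Matrix.mul_assoc, hUs, Matrix.mul_one]
    rw [Matrix.mul_sub, Matrix.sub_mul, hdiag, Matrix.mul_smul, Matrix.smul_mul,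
      Matrix.mul_one, hUs, smul_one_eq_diagonal, diagonal_sub]
  rw [hrw] at key
  have := posSemidef_diagonal_iff.mp key i
  linarith

private lemma eig_ub {C : Matrix n n ℝ} (hC : C.IsHermitian) {b : ℝ}
    (h2 : (b • 1 - C).PosSemidef) (i : n) : hC.eigenvalues i ≤ b := by
  set U : Matrix n n ℝ := (hC.eigenvectorUnitary : Matrix n n ℝ) with hUdef
  have hUs : star U * U = 1 := Unitary.coe_star_mul_self _
  have key := h2.conjTranspose_mul_mul_same U
  rw [← star_eq_conjTranspose] at key
  have hrw : star U * (b • 1 - C) * U = diagonal (fun i => b - hC.eigenvalues i) := by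
    have hdiag : star U * C * U = diagonal hC.eigenvalues := by
      have hs := spec_real hC
      calc star U * C * U = star U * (U * diagonal hC.eigenvalues * star U) * U := by rw [← hs]
        _ = diagonal hC.eigenvalues := by
          simp only [← Matrix.mul_assoc, hUs, Matrix.one_mul]
          simp only [Matrix.mul_assoc, hUs, Matrix.mul_one]
    rw [Matrix.mul_sub, Matrix.sub_mul, hdiag, Matrix.mul_smul, Matrix.smul_mul,
      Matrix.mul_one, hUs, smul_one_eq_diagonal, diagonal_sub]
  rw [hrw] at key
  have := posSemidef_diagonal_iff.mp key i
  linarith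

private lemma sq_psd {C : Matrix n n ℝ} (hC : C.IsHermitian) {a b c : ℝ}
    (h1 : (C - a • 1).PosSemidef) (h2 : (b • 1 - C).PosSemidef)
    (hf : ∀ t : ℝ, a ≤ t → t ≤ b → (1 - t) ^ 2 ≤ c) :
    (c • 1 - (1 - C) * (1 - C)).PosSemidef := by
  set U : Matrix n n ℝ := (hC.eigenvectorUnitary : Matrix n n ℝ) with hUdef
  have hUs : star U * U = 1 := Unitary.coe_star_mul_self _
  have hU' : U * star U = 1 := Matrix.mem_unitaryGroup_iff.mp hC.eigenvectorUnitary.2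
  set μ : n → ℝ := hC.eigenvalues with hμdef
  have hspec : C = U * diagonal μ * star U := spec_real hC
  have h1C : (1 : Matrix n n ℝ) - C = U * diagonal (fun i => 1 - μ i) * star U := by
    have h1' : (1 : Matrix n n ℝ) = (1 : ℝ) • (1 : Matrix n n ℝ) := (one_smul _ _).symm
    rw [h1', cdiag_one hU' 1]
    rw [hspec, cdiag_sub]
  have hprod : ((1 : Matrix n n ℝ) - C) * (1 - C)
      = U * diagonal (fun i => (1 - μ i) * (1 - μ i)) * star U := by
    rw [h1C, cdiag_mul hUs]
  have key : c • 1 - ((1 : Matrix n n ℝ) - C) * (1 - C)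
      = U * diagonal (fun i => c - (1 - μ i) * (1 - μ i)) * star U := by
    rw [cdiag_one hU' c, hprod, cdiag_sub]
  rw [key]
  refine conj_diag_psd _ fun i => ?_
  have hl := eig_lb hC h1 i
  have hu := eig_ub hC h2 i
  have := hf (μ i) hl hu
  nlinarith [this]

private lemma inv_psd {C : Matrix n n ℝ} (hC : C.IsHermitian) {a : ℝ} (ha : 0 < a)
    (h1 : (C - a • 1).PosSemidef) : (a⁻¹ • 1 - C⁻¹).PosSemidef := by
  set U : Matrix n n ℝ := (hC.eigenvectorUnitary : Matrix n n ℝ) with hUdef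
  have hUs : star U * U = 1 := Unitary.coe_star_mul_self _
  have hU' : U * star U = 1 := Matrix.mem_unitaryGroup_iff.mp hC.eigenvectorUnitary.2
  set μ : n → ℝ := hC.eigenvalues with hμdef
  have hspec : C = U * diagonal μ * star U := spec_real hC
  have hpos : ∀ i, 0 < μ i := fun i => lt_of_lt_of_le ha (eig_lb hC h1 i)
  have hCinv : C⁻¹ = U * diagonal (fun i => (μ i)⁻¹) * star U := by
    apply inv_eq_right_inv
    rw [hspec, cdiag_mul hUs]
    have : (fun i => μ i * (μ i)⁻¹) = fun _ : n => (1 : ℝ) := by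
      funext i; exact mul_inv_cancel₀ (hpos i).ne'
    rw [this, ← cdiag_one hU' 1, one_smul]
  have key : a⁻¹ • 1 - C⁻¹ = U * diagonal (fun i => a⁻¹ - (μ i)⁻¹) * star U := by
    rw [cdiag_one hU' a⁻¹, hCinv, cdiag_sub]
  rw [key]
  refine conj_diag_psd _ fun i => ?_
  have : (μ i)⁻¹ ≤ a⁻¹ := by
    apply inv_anti₀ ha (eig_lb hC h1 i)
  linarith

end Helpers

lemma Matrix.PosSemidef.sqrt_mul_self {n : Type*} [Fintype n] [DecidableEq n]
    {A : Matrix n n ℝ} (hA : A.PosSemidef) : hA.sqrt * hA.sqrt = A := by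
  have hUs : star (hA.1.eigenvectorUnitary : Matrix n n ℝ) * hA.1.eigenvectorUnitary = 1 :=
    Unitary.coe_star_mul_self _
  simp only [Matrix.PosSemidef.sqrt, Unitary.coe_star]
  rw [cdiag_mul hUs]
  conv_rhs => rw [spec_real hA.1]
  rw [show (fun i => Real.sqrt (hA.1.eigenvalues i) * Real.sqrt (hA.1.eigenvalues i))
      = hA.1.eigenvalues from funext fun i => Real.mul_self_sqrt (hA.eigenvalues_nonneg i)]

lemma Matrix.PosSemidef.posSemidef_sqrt {n : Type*} [Fintype n] [DecidableEq n]
    {A : Matrix n n ℝ} (hA : A.PosSemidef) : hA.sqrt.PosSemidef := by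
  simp only [Matrix.PosSemidef.sqrt, Unitary.coe_star]
  exact conj_diag_psd _ fun i => Real.sqrt_nonneg _

private lemma herm_smul {n : Type*} [Fintype n] {A : Matrix n n ℝ} (hA : A.IsHermitian)
    (c : ℝ) : (c • A).IsHermitian := by
  unfold Matrix.IsHermitian at *
  rw [conjTranspose_smul, hA]
  simp

private lemma herm_conj {n : Type*} [Fintype n] {A X : Matrix n n ℝ} (hA : A.IsHermitian)
    (hX : X.IsHermitian) : (X * A * X).IsHermitian := by
  unfold Matrix.IsHermitian at *
  rw [conjTranspose_mul, conjTranspose_mul, hX, hA, Matrix.mul_assoc]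

private lemma sqrt_det_isUnit {n : Type*} [Fintype n] [DecidableEq n]
    {A : Matrix n n ℝ} (hA : A.PosDef) : IsUnit hA.posSemidef.sqrt.det := by
  have hdet : hA.posSemidef.sqrt.det * hA.posSemidef.sqrt.det = A.det := by
    rw [← det_mul, hA.posSemidef.sqrt_mul_self]
  apply isUnit_iff_ne_zero.mpr
  intro h0
  rw [h0, mul_zero] at hdet
  exact hA.det_pos.ne' hdet.symm

set_option maxHeartbeats 1600000

/-- Contraction bound of the preconditioned Richardson iteration:
`‖M^{1/2}(I − NM′)M^{-1/2}‖₂ ≤ 2/5`, stated via the ℓ₂ operator bound on all vectors. -/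
theorem stmt9 (d : ℕ) (M M' N : Matrix (Fin d) (Fin d) ℝ) (hM : M.PosDef) (ε : ℝ)
    (hε0 : 0 ≤ ε) (hε : ε ≤ 1/8)
    (h1 : (M' - (1 - ε) • M).PosSemidef) (h2 : ((1 + ε) • M - M').PosSemidef)
    (h3 : (M⁻¹ - (7/8 : ℝ) • N).PosSemidef) (h4 : ((8/7 : ℝ) • N - M⁻¹).PosSemidef) :
    ∀ x : Fin d → ℝ,
      Real.sqrt (∑ i,
          (((hM.posSemidef.sqrt * (1 - N * M') * (hM.posSemidef.sqrt)⁻¹) *ᵥ x) i) ^ 2) ≤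
        (2/5) * Real.sqrt (∑ i, (x i) ^ 2) := by
  set S : Matrix (Fin d) (Fin d) ℝ := hM.posSemidef.sqrt with hSdef
  have hSpsd : S.PosSemidef := hM.posSemidef.posSemidef_sqrt
  have hSS : S * S = M := hM.posSemidef.sqrt_mul_self
  have hSh : S.IsHermitian := hSpsd.1
  have hMh : M.IsHermitian := hM.1
  have hdetS : IsUnit S.det := sqrt_det_isUnit hM
  have hS1 : S⁻¹ * S = 1 := nonsing_inv_mul _ hdetS
  have hS2 : S * S⁻¹ = 1 := mul_nonsing_inv _ hdetS
  have hSih : (S⁻¹).IsHermitian := by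
    unfold Matrix.IsHermitian
    rw [conjTranspose_nonsing_inv, hSh.eq]
  have hMih : (M⁻¹).IsHermitian := by
    unfold Matrix.IsHermitian
    rw [conjTranspose_nonsing_inv, hMh.eq]
  have hM'h : M'.IsHermitian := by
    have := h1.1.add (herm_smul hMh (1 - ε))
    rwa [sub_add_cancel] at this
  have hSMS : S * M⁻¹ * S = 1 := by
    have hMinv : M⁻¹ = S⁻¹ * S⁻¹ := by rw [← hSS, Matrix.mul_inv_rev]
    rw [hMinv]
    simp only [Matrix.mul_assoc, hS1, Matrix.mul_one, hS2]
  have hSMSi : S⁻¹ * M * S⁻¹ = 1 := by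
    rw [← hSS]
    simp only [Matrix.mul_assoc, hS2, Matrix.mul_one, hS1]
  set P : Matrix (Fin d) (Fin d) ℝ := S * N * S with hPdef
  set Q : Matrix (Fin d) (Fin d) ℝ := S⁻¹ * M' * S⁻¹ with hQdef
  -- bounds on P
  have hPl : (P - (7/8 : ℝ) • 1).PosSemidef := by
    have h4' := lsmul h4 (c := 7/8) (by norm_num)
    have h4'' : (N - (7/8 : ℝ) • M⁻¹).PosSemidef := by
      have heq : (7/8 : ℝ) • ((8/7 : ℝ) • N - M⁻¹) = N - (7/8 : ℝ) • M⁻¹ := by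
        rw [smul_sub, smul_smul]; norm_num
      rwa [heq] at h4'
    have hc := lconj S h4''
    rw [hSh.eq, Matrix.mul_smul, Matrix.smul_mul, hSMS] at hc
    exact hc
  have hPu : ((8/7 : ℝ) • 1 - P).PosSemidef := by
    have hc := lconj S h3
    rw [hSh.eq, hSMS, Matrix.mul_smul, Matrix.smul_mul] at hc
    have hc' := lsmul hc (c := 8/7) (by norm_num)
    have heq : (8/7 : ℝ) • ((1 : Matrix (Fin d) (Fin d) ℝ) - (7/8 : ℝ) • P)
        = (8/7 : ℝ) • 1 - P := by
      rw [smul_sub, smul_smul]; norm_num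
    rwa [heq] at hc'
  -- bounds on Q
  have hQl : (Q - (7/8 : ℝ) • 1).PosSemidef := by
    have hc := lconj S⁻¹ h1
    rw [hSih.eq, Matrix.mul_smul, Matrix.smul_mul, hSMSi] at hc
    have hadd := hc.add (lsmul_one (c := (1 - ε) - 7/8) (by linarith))
    have heq : Q - (1 - ε) • (1 : Matrix (Fin d) (Fin d) ℝ) + ((1 - ε) - 7/8) • 1
        = Q - (7/8 : ℝ) • 1 := by
      module
    rwa [heq] at hadd
  have hQu : ((9/8 : ℝ) • 1 - Q).PosSemidef := by
    have hc := lconj S⁻¹ h2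
    rw [hSih.eq, Matrix.mul_smul, Matrix.smul_mul, hSMSi] at hc
    have hadd := (lsmul_one (c := 9/8 - (1 + ε)) (by linarith)).add hc
    have heq : (9/8 - (1 + ε)) • (1 : Matrix (Fin d) (Fin d) ℝ) + ((1 + ε) • 1 - Q)
        = (9/8 : ℝ) • 1 - Q := by
      module
    rwa [heq] at hadd
  -- P pos def
  have hPd : P.PosDef := by
    have h78 : ((7/8 : ℝ) • (1 : Matrix (Fin d) (Fin d) ℝ)).PosDef := by
      rw [smul_one_eq_diagonal]
      exact posDef_diagonal_iff.mpr fun i => by norm_num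
    have := Matrix.PosDef.posSemidef_add hPl h78
    rwa [sub_add_cancel] at this
  have hPh : P.IsHermitian := hPd.1
  set W : Matrix (Fin d) (Fin d) ℝ := hPd.posSemidef.sqrt with hWdef
  have hWpsd : W.PosSemidef := hPd.posSemidef.posSemidef_sqrt
  have hWW : W * W = P := hPd.posSemidef.sqrt_mul_self
  have hWh : W.IsHermitian := hWpsd.1
  have hdetW : IsUnit W.det := sqrt_det_isUnit hPd
  have hW1 : W⁻¹ * W = 1 := nonsing_inv_mul _ hdetW
  have hW2 : W * W⁻¹ = 1 := mul_nonsing_inv _ hdetW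
  have hWih : (W⁻¹).IsHermitian := by
    unfold Matrix.IsHermitian
    rw [conjTranspose_nonsing_inv, hWh.eq]
  have hQh : Q.IsHermitian := herm_conj hM'h hSih
  set Z : Matrix (Fin d) (Fin d) ℝ := W * Q * W with hZdef
  have hZh : Z.IsHermitian := herm_conj hQh hWh
  have h1Zh : ((1 : Matrix (Fin d) (Fin d) ℝ) - Z).IsHermitian := isHermitian_one.sub hZh
  -- bounds on Z
  have hZl : (Z - (49/64 : ℝ) • 1).PosSemidef := by
    have c1 := lconj W hQl
    rw [hWh.eq, Matrix.mul_smul, Matrix.mul_one, Matrix.smul_mul, hWW] at c1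
    have c2 := lsmul hPl (c := 7/8) (by norm_num)
    have heq : (7/8 : ℝ) • (P - (7/8 : ℝ) • (1 : Matrix (Fin d) (Fin d) ℝ))
        = (7/8 : ℝ) • P - (49/64 : ℝ) • 1 := by
      rw [smul_sub, smul_smul]; norm_num
    rw [heq] at c2
    exact lsub_trans c1 c2
  have hZu : ((9/7 : ℝ) • 1 - Z).PosSemidef := by
    have c1 := lconj W hQu
    rw [hWh.eq, Matrix.mul_smul, Matrix.mul_one, Matrix.smul_mul, hWW] at c1
    have c2 := lsmul hPu (c := 9/8) (by norm_num)
    have heq : (9/8 : ℝ) • ((8/7 : ℝ) • (1 : Matrix (Fin d) (Fin d) ℝ) - P)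
        = (9/7 : ℝ) • 1 - (9/8 : ℝ) • P := by
      rw [smul_sub, smul_smul]; norm_num
    rw [heq] at c2
    exact lsub_trans c2 c1
  -- spectral bounds
  have hsq : ((4/49 : ℝ) • 1 - ((1 : Matrix (Fin d) (Fin d) ℝ) - Z) * (1 - Z)).PosSemidef := by
    refine sq_psd hZh hZl hZu ?_
    intro t h1t h2t
    nlinarith [mul_nonneg (by linarith : (0:ℝ) ≤ t - 49/64) (by linarith : (0:ℝ) ≤ 9/7 - t)]
  have hPinv : ((8/7 : ℝ) • 1 - P⁻¹).PosSemidef := by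
    have := inv_psd hPh (a := 7/8) (by norm_num) hPl
    have heq : ((7/8 : ℝ)⁻¹) = (8/7 : ℝ) := by norm_num
    rwa [heq] at this
  -- algebraic identities
  have hB : S * (1 - N * M') * S⁻¹ = 1 - P * Q := by
    rw [hPdef, hQdef, Matrix.mul_sub, Matrix.mul_one, Matrix.sub_mul, hS2]
    refine sub_right_inj.mpr ?_
    have e1 : ∀ X : Matrix (Fin d) (Fin d) ℝ, S * (S⁻¹ * X) = X := fun X => by
      rw [← Matrix.mul_assoc, hS2, Matrix.one_mul]
    simp only [Matrix.mul_assoc, e1]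
  have hB2 : (1 : Matrix (Fin d) (Fin d) ℝ) - P * Q = W * (1 - Z) * W⁻¹ := by
    rw [hZdef, ← hWW, Matrix.mul_sub, Matrix.mul_one, Matrix.sub_mul, hW2]
    refine sub_right_inj.mpr ?_
    simp only [Matrix.mul_assoc, hW2, Matrix.mul_one]
  have hBfull : S * (1 - N * M') * S⁻¹ = W * (1 - Z) * W⁻¹ := hB.trans hB2
  have hBH : (S * (1 - N * M') * S⁻¹)ᴴ = W⁻¹ * (1 - Z) * W := by
    rw [hBfull, conjTranspose_mul, conjTranspose_mul, hWih.eq, h1Zh.eq, hWh.eq,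
      Matrix.mul_assoc]
  have hBB : (S * (1 - N * M') * S⁻¹)ᴴ * (S * (1 - N * M') * S⁻¹)
      = W⁻¹ * (((1 : Matrix (Fin d) (Fin d) ℝ) - Z) * P * (1 - Z)) * W⁻¹ := by
    rw [hBH, hBfull, ← hWW]
    simp only [Matrix.mul_assoc]
  -- chain
  have t1 : ((32/343 : ℝ) • 1 - ((1 : Matrix (Fin d) (Fin d) ℝ) - Z) * P * (1 - Z)).PosSemidef := by
    have s1 := lconj (1 - Z) hPu
    rw [h1Zh.eq, Matrix.mul_smul, Matrix.mul_one, Matrix.smul_mul] at s1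
    have s2 := lsmul hsq (c := 8/7) (by norm_num)
    have heq : (8/7 : ℝ) • ((4/49 : ℝ) • (1 : Matrix (Fin d) (Fin d) ℝ)
          - ((1 : Matrix (Fin d) (Fin d) ℝ) - Z) * (1 - Z))
        = (32/343 : ℝ) • 1 - (8/7 : ℝ) • (((1 : Matrix (Fin d) (Fin d) ℝ) - Z) * (1 - Z)) := by
      rw [smul_sub, smul_smul]; norm_num
    rw [heq] at s2
    exact lsub_trans s2 s1
  have t2 : ((32/343 : ℝ) • P⁻¹
      - (S * (1 - N * M') * S⁻¹)ᴴ * (S * (1 - N * M') * S⁻¹)).PosSemidef := by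
    have hc := lconj W⁻¹ t1
    rw [hWih.eq, Matrix.mul_smul, Matrix.mul_one, Matrix.smul_mul] at hc
    have hWinv : W⁻¹ * W⁻¹ = P⁻¹ := by rw [← Matrix.mul_inv_rev, hWW]
    rwa [hWinv, ← hBB] at hc
  have t3 : ((256/2401 : ℝ) • 1 - (32/343 : ℝ) • P⁻¹).PosSemidef := by
    have hc := lsmul hPinv (c := 32/343) (by norm_num)
    have heq : (32/343 : ℝ) • ((8/7 : ℝ) • (1 : Matrix (Fin d) (Fin d) ℝ) - P⁻¹)
        = (256/2401 : ℝ) • 1 - (32/343 : ℝ) • P⁻¹ := by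
      rw [smul_sub, smul_smul]; norm_num
    rwa [heq] at hc
  have t4 : ((4/25 : ℝ) • (1 : Matrix (Fin d) (Fin d) ℝ) - (256/2401 : ℝ) • 1).PosSemidef := by
    have heq : (4/25 : ℝ) • (1 : Matrix (Fin d) (Fin d) ℝ) - (256/2401 : ℝ) • 1
        = ((4/25 - 256/2401 : ℝ)) • 1 := by rw [sub_smul]
    rw [heq]
    exact lsmul_one (by norm_num)
  have hfin : ((4/25 : ℝ) • 1
      - (S * (1 - N * M') * S⁻¹)ᴴ * (S * (1 - N * M') * S⁻¹)).PosSemidef :=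
    lsub_trans t4 (lsub_trans t3 t2)
  -- conclude
  intro x
  have h0 := hfin.dotProduct_mulVec_nonneg x
  set B : Matrix (Fin d) (Fin d) ℝ := S * (1 - N * M') * S⁻¹ with hBdef
  rw [sub_mulVec, smul_mulVec, one_mulVec, dotProduct_sub, dotProduct_smul,
    ← mulVec_mulVec] at h0
  have hstar : star x = x := by ext i; simp
  rw [hstar, dotProduct_mulVec x Bᴴ (B *ᵥ x)] at h0
  have hBt : x ᵥ* Bᴴ = B *ᵥ x := by
    have hT : Bᴴ = Bᵀ := by
      ext i j
      simp [conjTranspose_apply, transpose_apply]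
    rw [hT, vecMul_transpose]
  rw [hBt] at h0
  have hxx : x ⬝ᵥ x = ∑ i, (x i) ^ 2 := by
    simp [dotProduct, pow_two]
  have hBB' : (B *ᵥ x) ⬝ᵥ (B *ᵥ x) = ∑ i, ((B *ᵥ x) i) ^ 2 := by
    simp [dotProduct, pow_two]
  rw [hxx, hBB', smul_eq_mul] at h0
  have hle : ∑ i, ((B *ᵥ x) i) ^ 2 ≤ (4/25) * ∑ i, (x i) ^ 2 := by linarith
  calc Real.sqrt (∑ i, ((B *ᵥ x) i) ^ 2)
      ≤ Real.sqrt ((4/25) * ∑ i, (x i) ^ 2) := Real.sqrt_le_sqrt hle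
    _ = (2/5) * Real.sqrt (∑ i, (x i) ^ 2) := by
        rw [show (4/25 : ℝ) = (2/5) ^ 2 by norm_num, Real.sqrt_mul (by positivity),
          Real.sqrt_sq (by norm_num)]
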